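/- arXiv:2108.02856 — 2 statements merged into one kernel-verified Lean document; each statement's English description precedes it below -/
import Mathlib

section
/- Scaled Hölder embedding on balls: let s ∈ (0,1), p ∈ [1,∞) with sp > n. Then there is C = C(n,s,p) > 0 such that for every r > 0, x0 ∈ ℝ^n, and every u ∈ W^{s,p}(B_r(x0)), the Hölder seminorm satisfies [u]_{C^{s−n/p}(B_r(x0))} ≤ C [u]_{W^{s,p}(B_r(x0))}, with constant independent of r and x0. -/
open MeasureTheory Metric Set
open scoped ENNReal NNReal

namespace Stmt4Aux

noncomputable section

variable {n : ℕ}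

/-- The (raw) Gagliardo double integral. -/
def Gag (s p r : ℝ) (x0 : EuclideanSpace ℝ (Fin n)) (u : EuclideanSpace ℝ (Fin n) → ℝ) : ℝ≥0∞ :=
  ∫⁻ a in ball x0 r, ∫⁻ b in ball x0 r,
    ENNReal.ofReal (|u a - u b| ^ p / ‖a - b‖ ^ ((n : ℝ) + s * p))

/-- Extension by zero of a function continuous on an open set is measurable. -/
lemma meas_ext {s : Set (EuclideanSpace ℝ (Fin n))} (hs : IsOpen s)
    {u : EuclideanSpace ℝ (Fin n) → ℝ} (hu : ContinuousOn u s) :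
    ∃ w : EuclideanSpace ℝ (Fin n) → ℝ, Measurable w ∧ ∀ z ∈ s, w z = u z := by
  classical
  refine ⟨s.piecewise u (fun _ => (0 : ℝ)), ?_, fun z hz => by simp [Set.piecewise, hz]⟩
  apply measurable_of_isOpen
  intro t ht
  rw [Set.piecewise_preimage, Set.ite]
  apply MeasurableSet.union
  · exact ((hu.isOpen_inter_preimage hs ht).measurableSet.congr (by ext z; simp [and_comm]))
  · apply MeasurableSet.diff _ hs.measurableSet
    by_cases h0 : (0 : ℝ) ∈ t
    · simp [Set.preimage_const, h0]
    · simp [Set.preimage_const, h0]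

lemma pow_rpow_comm {a : ℝ} (ha : 0 ≤ a) (k : ℕ) (c : ℝ) :
    (a ^ k) ^ c = (a ^ c) ^ k := by
  rw [← Real.rpow_natCast a k, ← Real.rpow_mul ha, mul_comm, Real.rpow_mul ha,
    Real.rpow_natCast]

/-- Scaling algebra for the constants. -/
lemma alg {s p : ℝ} (hp0 : 0 < p) {ρ v : ℝ} (c1 c2 c3 : ℝ) (hρ : 0 < ρ) (hv : 0 < v)
    (hc1 : 0 < c1) (hc2 : 0 < c2) (hc3 : 0 < c3) :
    (c3 * ρ) ^ (((n : ℝ) + s * p) / p) * ((c1 * ρ) ^ n * v * ((c2 * ρ) ^ n * v)) ^ (-(1 / p)) =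
      c3 ^ (((n : ℝ) + s * p) / p) * (c1 ^ n * v * (c2 ^ n * v)) ^ (-(1 / p)) *
        ρ ^ (s - (n : ℝ) / p) := by
  have e1 : (c3 * ρ) ^ (((n : ℝ) + s * p) / p)
      = c3 ^ (((n : ℝ) + s * p) / p) * ρ ^ (((n : ℝ) + s * p) / p) :=
    Real.mul_rpow hc3.le hρ.le
  have e2 : (c1 * ρ) ^ n * v * ((c2 * ρ) ^ n * v)
      = (c1 ^ n * v * (c2 ^ n * v)) * ρ ^ (n + n) := by
    rw [mul_pow, mul_pow, pow_add]; ring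
  have e3 : ((c1 ^ n * v * (c2 ^ n * v)) * ρ ^ (n + n)) ^ (-(1 / p))
      = (c1 ^ n * v * (c2 ^ n * v)) ^ (-(1 / p)) * (ρ ^ (n + n) : ℝ) ^ (-(1 / p)) :=
    Real.mul_rpow (by positivity) (by positivity)
  have e4 : (ρ ^ (n + n) : ℝ) ^ (-(1 / p)) = ρ ^ ((((n : ℝ) + n)) * (-(1 / p))) := by
    rw [← Real.rpow_natCast ρ (n + n), ← Real.rpow_mul hρ.le]
    push_cast
    ring_nf
  have e5 : ρ ^ (((n : ℝ) + s * p) / p) * ρ ^ ((((n : ℝ) + n)) * (-(1 / p)))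
      = ρ ^ (s - (n : ℝ) / p) := by
    rw [← Real.rpow_add hρ]
    congr 1
    field_simp
    ring
  rw [e1, e2, e3, e4]
  calc c3 ^ (((n : ℝ) + s * p) / p) * ρ ^ (((n : ℝ) + s * p) / p) *
        ((c1 ^ n * v * (c2 ^ n * v)) ^ (-(1 / p)) * ρ ^ ((((n : ℝ) + n)) * (-(1 / p))))
      = c3 ^ (((n : ℝ) + s * p) / p) * (c1 ^ n * v * (c2 ^ n * v)) ^ (-(1 / p)) *
        (ρ ^ (((n : ℝ) + s * p) / p) * ρ ^ ((((n : ℝ) + n)) * (-(1 / p)))) := by ring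
    _ = _ := by rw [e5]

set_option maxHeartbeats 1000000 in
/-- Core averaged Hölder estimate between two balls. -/
lemma core {s p : ℝ} (hs0 : 0 < s) (hp : 1 ≤ p)
    {r : ℝ} {x0 : EuclideanSpace ℝ (Fin n)} {u : EuclideanSpace ℝ (Fin n) → ℝ}
    (hmeas : Measurable u) (hcont : ContinuousOn u (ball x0 r))
    {cA cB : EuclideanSpace ℝ (Fin n)} {ρA ρB : ℝ} (hρA : 0 < ρA) (hρB : 0 < ρB)
    (hAsub : closedBall cA ρA ⊆ ball x0 r) (hBsub : closedBall cB ρB ⊆ ball x0 r)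
    {D : ℝ} (hD0 : 0 < D)
    (hD : ∀ a ∈ ball cA ρA, ∀ b ∈ ball cB ρB, ‖a - b‖ ≤ D)
    (hG : Gag s p r x0 u ≠ ⊤) :
    |(⨍ a in ball cA ρA, u a) - ⨍ b in ball cB ρB, u b| ≤
      D ^ (((n : ℝ) + s * p) / p) *
        ((volume (ball cA ρA)).toReal * (volume (ball cB ρB)).toReal) ^ (-(1 / p)) *
        ((Gag s p r x0 u) ^ (1 / p)).toReal := by
  have hp0 : (0 : ℝ) < p := lt_of_lt_of_le one_pos hp
  set A := ball cA ρA with hA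
  set B := ball cB ρB with hB
  have he0 : (0 : ℝ) < (n : ℝ) + s * p := add_pos_of_nonneg_of_pos (Nat.cast_nonneg n) (mul_pos hs0 hp0)
  have hAsub' : A ⊆ ball x0 r := (ball_subset_closedBall).trans hAsub
  have hBsub' : B ⊆ ball x0 r := (ball_subset_closedBall).trans hBsub
  have hmA0 : volume A ≠ 0 := (measure_ball_pos volume cA hρA).ne'
  have hmB0 : volume B ≠ 0 := (measure_ball_pos volume cB hρB).ne'
  have hmAt : volume A ≠ ⊤ := measure_ball_lt_top.ne
  have hmBt : volume B ≠ ⊤ := measure_ball_lt_top.ne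
  have hmAr : 0 < (volume A).toReal := ENNReal.toReal_pos hmA0 hmAt
  have hmBr : 0 < (volume B).toReal := ENNReal.toReal_pos hmB0 hmBt
  have hIA : IntegrableOn u A :=
    ((hcont.mono hAsub).integrableOn_compact (isCompact_closedBall _ _)).mono_set
      ball_subset_closedBall
  have hIB : IntegrableOn u B :=
    ((hcont.mono hBsub).integrableOn_compact (isCompact_closedBall _ _)).mono_set
      ball_subset_closedBall
  -- Step A : bound the average difference by a double lintegral
  have hBavg : ∀ a : EuclideanSpace ℝ (Fin n),
      ENNReal.ofReal |u a - ⨍ b in B, u b| ≤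
        (volume B)⁻¹ * ∫⁻ b in B, ENNReal.ofReal |u a - u b| := by
    intro a
    have e1 : u a - ⨍ b in B, u b
        = ((volume B).toReal)⁻¹ • (∫ b in B, (u a - u b) ∂volume) := by
      rw [integral_sub (integrableOn_const (C := u a) measure_ball_lt_top.ne) hIB,
        setIntegral_const, setAverage_eq, smul_sub, smul_smul, measureReal_def,
        inv_mul_cancel₀ hmBr.ne', one_smul]
    rw [e1, smul_eq_mul, abs_mul, abs_inv, abs_of_nonneg ENNReal.toReal_nonneg,
      ENNReal.ofReal_mul (by positivity)]
    have e2 : ENNReal.ofReal (((volume B).toReal)⁻¹) = (volume B)⁻¹ := by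
      rw [ENNReal.ofReal_inv_of_pos hmBr, ENNReal.ofReal_toReal hmBt]
    rw [e2]
    gcongr
    calc ENNReal.ofReal |∫ b in B, (u a - u b) ∂volume|
        = ↑‖∫ b in B, (u a - u b) ∂volume‖₊ := by
          rw [← Real.enorm_eq_ofReal_abs, enorm_eq_nnnorm]
      _ ≤ ∫⁻ b in B, ↑‖u a - u b‖₊ ∂volume := enorm_integral_le_lintegral_enorm _
      _ = ∫⁻ b in B, ENNReal.ofReal |u a - u b| ∂volume := by
          simp_rw [← enorm_eq_nnnorm, Real.enorm_eq_ofReal_abs]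
  have stepA : ENNReal.ofReal |(⨍ a in A, u a) - ⨍ b in B, u b| ≤
      (volume A)⁻¹ * ((volume B)⁻¹ *
        ∫⁻ a in A, ∫⁻ b in B, ENNReal.ofReal |u a - u b|) := by
    set m : ℝ := ⨍ b in B, u b with hm
    have e1 : (⨍ a in A, u a) - m
        = ((volume A).toReal)⁻¹ • (∫ a in A, (u a - m) ∂volume) := by
      rw [integral_sub hIA (integrableOn_const (C := m) measure_ball_lt_top.ne),
        setIntegral_const, setAverage_eq, smul_sub, smul_smul, measureReal_def,
        inv_mul_cancel₀ hmAr.ne', one_smul]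
    rw [e1, smul_eq_mul, abs_mul, abs_inv, abs_of_nonneg ENNReal.toReal_nonneg,
      ENNReal.ofReal_mul (by positivity)]
    have e2 : ENNReal.ofReal (((volume A).toReal)⁻¹) = (volume A)⁻¹ := by
      rw [ENNReal.ofReal_inv_of_pos hmAr, ENNReal.ofReal_toReal hmAt]
    rw [e2]
    gcongr
    calc ENNReal.ofReal |∫ a in A, (u a - m) ∂volume|
        = ↑‖∫ a in A, (u a - m) ∂volume‖₊ := by
          rw [← Real.enorm_eq_ofReal_abs, enorm_eq_nnnorm]
      _ ≤ ∫⁻ a in A, ↑‖u a - m‖₊ ∂volume := enorm_integral_le_lintegral_enorm _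
      _ = ∫⁻ a in A, ENNReal.ofReal |u a - m| ∂volume := by
          simp_rw [← enorm_eq_nnnorm, Real.enorm_eq_ofReal_abs]
      _ ≤ ∫⁻ a in A, (volume B)⁻¹ * ∫⁻ b in B, ENNReal.ofReal |u a - u b| ∂volume :=
          lintegral_mono fun a => hBavg a
      _ = (volume B)⁻¹ * ∫⁻ a in A, ∫⁻ b in B, ENNReal.ofReal |u a - u b| :=
          lintegral_const_mul' _ _ (ENNReal.inv_ne_top.2 hmB0)
  -- Step B : Hölder
  have hmeas2 : Measurable (fun z : EuclideanSpace ℝ (Fin n) × EuclideanSpace ℝ (Fin n) =>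
      ENNReal.ofReal |u z.1 - u z.2| ^ p) := by
    apply Measurable.pow_const
    exact ENNReal.measurable_ofReal.comp ((hmeas.comp measurable_fst).sub
      (hmeas.comp measurable_snd)).abs
  have hmeasf : ∀ a : EuclideanSpace ℝ (Fin n),
      Measurable (fun b => ENNReal.ofReal |u a - u b|) := fun a =>
    ENNReal.measurable_ofReal.comp ((measurable_const.sub hmeas).abs)
  have hmeasI : Measurable (fun a => ∫⁻ b in B, ENNReal.ofReal |u a - u b| ^ p ∂volume) :=
    Measurable.lintegral_prod_right' hmeas2
  have stepB : (∫⁻ a in A, ∫⁻ b in B, ENNReal.ofReal |u a - u b|) ≤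
      (∫⁻ a in A, ∫⁻ b in B, ENNReal.ofReal |u a - u b| ^ p) ^ (1 / p) *
        (volume A * volume B) ^ (1 - 1 / p) := by
    rcases eq_or_lt_of_le hp with hp1 | hp1
    · simp only [← hp1]
      simp [ENNReal.rpow_one]
    · set q : ℝ := p.conjExponent with hq
      have hpq : p.HolderConjugate q := Real.HolderConjugate.conjExponent hp1
      have h1q : 1 - 1 / p = 1 / q := by
        rw [one_div, one_div, hpq.one_sub_inv]
      have hin : ∀ a : EuclideanSpace ℝ (Fin n),
          (∫⁻ b in B, ENNReal.ofReal |u a - u b|) ≤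
            (∫⁻ b in B, ENNReal.ofReal |u a - u b| ^ p) ^ (1 / p) * (volume B) ^ (1 / q) := by
        intro a
        have := ENNReal.lintegral_mul_le_Lp_mul_Lq (volume.restrict B) hpq
          ((hmeasf a).aemeasurable) (aemeasurable_const (b := (1 : ℝ≥0∞)))
        simpa [setLIntegral_one, Measure.restrict_apply_univ] using this
      calc (∫⁻ a in A, ∫⁻ b in B, ENNReal.ofReal |u a - u b|)
          ≤ ∫⁻ a in A, (∫⁻ b in B, ENNReal.ofReal |u a - u b| ^ p) ^ (1 / p) *
              (volume B) ^ (1 / q) := lintegral_mono fun a => hin a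
        _ = (∫⁻ a in A, (∫⁻ b in B, ENNReal.ofReal |u a - u b| ^ p) ^ (1 / p)) *
              (volume B) ^ (1 / q) :=
            lintegral_mul_const' _ _ (ENNReal.rpow_ne_top_of_nonneg (one_div_nonneg.2 hpq.symm.pos.le) hmBt)
        _ ≤ ((∫⁻ a in A, ((∫⁻ b in B, ENNReal.ofReal |u a - u b| ^ p) ^ (1 / p)) ^ p) ^ (1 / p)
              * (volume A) ^ (1 / q)) * (volume B) ^ (1 / q) := by
            gcongr
            have := ENNReal.lintegral_mul_le_Lp_mul_Lq (volume.restrict A) hpq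
              ((hmeasI.pow_const (1 / p)).aemeasurable) (aemeasurable_const (b := (1 : ℝ≥0∞)))
            simpa [setLIntegral_one, Measure.restrict_apply_univ] using this
        _ = (∫⁻ a in A, ∫⁻ b in B, ENNReal.ofReal |u a - u b| ^ p) ^ (1 / p) *
              ((volume A) ^ (1 / q) * (volume B) ^ (1 / q)) := by
            have erw : ∀ x : ℝ≥0∞, (x ^ (1 / p)) ^ p = x := by
              intro x
              rw [← ENNReal.rpow_mul, one_div, inv_mul_cancel₀ hp0.ne', ENNReal.rpow_one]
            simp_rw [erw]
            ring
        _ = (∫⁻ a in A, ∫⁻ b in B, ENNReal.ofReal |u a - u b| ^ p) ^ (1 / p) *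
              (volume A * volume B) ^ (1 - 1 / p) := by
            rw [h1q, ENNReal.mul_rpow_of_ne_top hmAt hmBt]
  -- Step C : bound the p-power double integral by the Gagliardo integral
  have stepC : (∫⁻ a in A, ∫⁻ b in B, ENNReal.ofReal |u a - u b| ^ p) ≤
      ENNReal.ofReal (D ^ ((n : ℝ) + s * p)) * Gag s p r x0 u := by
    have pw : ∀ a ∈ A, ∀ b ∈ B, ENNReal.ofReal |u a - u b| ^ p ≤
        ENNReal.ofReal (D ^ ((n : ℝ) + s * p)) *
          ENNReal.ofReal (|u a - u b| ^ p / ‖a - b‖ ^ ((n : ℝ) + s * p)) := by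
      intro a ha b hb
      rw [ENNReal.ofReal_rpow_of_nonneg (abs_nonneg _) hp0.le,
        ← ENNReal.ofReal_mul (Real.rpow_nonneg hD0.le _)]
      apply ENNReal.ofReal_le_ofReal
      rcases eq_or_ne a b with rfl | hab
      · simp only [sub_self, abs_zero]
        rw [Real.zero_rpow hp0.ne']
        exact mul_nonneg (Real.rpow_nonneg hD0.le _) (by positivity)
      · have hab' : (0 : ℝ) < ‖a - b‖ := by rwa [norm_sub_pos_iff]
        have hXpos : (0 : ℝ) < ‖a - b‖ ^ ((n : ℝ) + s * p) :=
          Real.rpow_pos_of_pos hab' _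
        have hle : ‖a - b‖ ^ ((n : ℝ) + s * p) ≤ D ^ ((n : ℝ) + s * p) :=
          Real.rpow_le_rpow hab'.le (hD a ha b hb) he0.le
        calc |u a - u b| ^ p
            = |u a - u b| ^ p / ‖a - b‖ ^ ((n : ℝ) + s * p) * ‖a - b‖ ^ ((n : ℝ) + s * p) := by
              field_simp
          _ ≤ |u a - u b| ^ p / ‖a - b‖ ^ ((n : ℝ) + s * p) * D ^ ((n : ℝ) + s * p) := by
              apply mul_le_mul_of_nonneg_left hle (by positivity)
          _ = D ^ ((n : ℝ) + s * p) * (|u a - u b| ^ p / ‖a - b‖ ^ ((n : ℝ) + s * p)) := by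
              ring
    calc (∫⁻ a in A, ∫⁻ b in B, ENNReal.ofReal |u a - u b| ^ p)
        ≤ ∫⁻ a in A, (ENNReal.ofReal (D ^ ((n : ℝ) + s * p)) *
            ∫⁻ b in B, ENNReal.ofReal (|u a - u b| ^ p / ‖a - b‖ ^ ((n : ℝ) + s * p))) := by
          apply setLIntegral_mono' measurableSet_ball
          intro a ha
          rw [← lintegral_const_mul' _ _ ENNReal.ofReal_ne_top]
          exact setLIntegral_mono' measurableSet_ball (fun b hb => pw a ha b hb)
      _ = ENNReal.ofReal (D ^ ((n : ℝ) + s * p)) *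
            ∫⁻ a in A, ∫⁻ b in B, ENNReal.ofReal (|u a - u b| ^ p / ‖a - b‖ ^ ((n : ℝ) + s * p)) :=
          lintegral_const_mul' _ _ ENNReal.ofReal_ne_top
      _ ≤ ENNReal.ofReal (D ^ ((n : ℝ) + s * p)) * Gag s p r x0 u := by
          gcongr
          refine le_trans (lintegral_mono fun a => lintegral_mono_set hBsub')
            (lintegral_mono_set hAsub')
  -- Combine
  have hGrt : (Gag s p r x0 u) ^ (1 / p) ≠ ⊤ :=
    ENNReal.rpow_ne_top_of_nonneg (one_div_nonneg.2 hp0.le) hG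
  have key : ENNReal.ofReal |(⨍ a in A, u a) - ⨍ b in B, u b| ≤
      ENNReal.ofReal (D ^ (((n : ℝ) + s * p) / p)) *
        ENNReal.ofReal (((volume A).toReal * (volume B).toReal) ^ (-(1 / p))) *
        (Gag s p r x0 u) ^ (1 / p) := by
    have hJ : (∫⁻ a in A, ∫⁻ b in B, ENNReal.ofReal |u a - u b|) ≤
        (ENNReal.ofReal (D ^ ((n : ℝ) + s * p)) * Gag s p r x0 u) ^ (1 / p) *
          (volume A * volume B) ^ (1 - 1 / p) := by
      refine stepB.trans ?_
      exact mul_le_mul_left (ENNReal.rpow_le_rpow stepC (one_div_nonneg.2 hp0.le)) _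
    have h1 : ENNReal.ofReal |(⨍ a in A, u a) - ⨍ b in B, u b| ≤
        (volume A)⁻¹ * ((volume B)⁻¹ *
          ((ENNReal.ofReal (D ^ ((n : ℝ) + s * p)) * Gag s p r x0 u) ^ (1 / p) *
            (volume A * volume B) ^ (1 - 1 / p))) :=
      stepA.trans (mul_le_mul_right (mul_le_mul_right hJ _) _)
    refine h1.trans_eq ?_
    have hmm : (volume A * volume B) ≠ 0 := mul_ne_zero hmA0 hmB0
    have hmmt : (volume A * volume B) ≠ ⊤ := ENNReal.mul_ne_top hmAt hmBt
    have hX : (ENNReal.ofReal (D ^ ((n : ℝ) + s * p))) ^ (1 / p)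
        = ENNReal.ofReal (D ^ (((n : ℝ) + s * p) / p)) := by
      rw [ENNReal.ofReal_rpow_of_pos (Real.rpow_pos_of_pos hD0 _), ← Real.rpow_mul hD0.le,
        mul_one_div]
    have em : ENNReal.ofReal (((volume A).toReal * (volume B).toReal) ^ (-(1 / p)))
        = (volume A * volume B) ^ (-(1 / p)) := by
      rw [← ENNReal.ofReal_rpow_of_pos (mul_pos hmAr hmBr)]
      congr 1
      rw [ENNReal.ofReal_mul ENNReal.toReal_nonneg, ENNReal.ofReal_toReal hmAt,
        ENNReal.ofReal_toReal hmBt]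
    have einv : (volume A)⁻¹ * (volume B)⁻¹ = (volume A * volume B) ^ (-1 : ℝ) := by
      rw [ENNReal.rpow_neg_one, ENNReal.mul_inv (Or.inl hmA0) (Or.inl hmAt)]
    have efin : (volume A * volume B) ^ (-1 : ℝ) * (volume A * volume B) ^ (1 - 1 / p)
        = (volume A * volume B) ^ (-(1 / p)) := by
      rw [← ENNReal.rpow_add _ _ hmm hmmt]
      congr 1
      ring
    calc (volume A)⁻¹ * ((volume B)⁻¹ *
          ((ENNReal.ofReal (D ^ ((n : ℝ) + s * p)) * Gag s p r x0 u) ^ (1 / p) *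
            (volume A * volume B) ^ (1 - 1 / p)))
        = ((volume A)⁻¹ * (volume B)⁻¹ * (volume A * volume B) ^ (1 - 1 / p)) *
            ((ENNReal.ofReal (D ^ ((n : ℝ) + s * p))) ^ (1 / p) *
              (Gag s p r x0 u) ^ (1 / p)) := by
          rw [ENNReal.mul_rpow_of_nonneg _ _ (one_div_nonneg.2 hp0.le)]
          ring
      _ = ((volume A * volume B) ^ (-(1 / p))) *
            (ENNReal.ofReal (D ^ (((n : ℝ) + s * p) / p)) * (Gag s p r x0 u) ^ (1 / p)) := by
          rw [hX, einv, efin]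
      _ = _ := by rw [← em]; ring
  have final := key
  have hb1 : (0:ℝ) ≤ D ^ (((n : ℝ) + s * p) / p) := Real.rpow_nonneg hD0.le _
  have hb2 : (0:ℝ) ≤ ((volume A).toReal * (volume B).toReal) ^ (-(1 / p)) :=
    Real.rpow_nonneg (mul_nonneg ENNReal.toReal_nonneg ENNReal.toReal_nonneg) _
  rw [← ENNReal.ofReal_toReal hGrt, ← ENNReal.ofReal_mul hb1,
    ← ENNReal.ofReal_mul (mul_nonneg hb1 hb2)] at final
  exact (ENNReal.ofReal_le_ofReal_iff
    (mul_nonneg (mul_nonneg hb1 hb2) ENNReal.toReal_nonneg)).1 final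

set_option maxHeartbeats 1000000 in
/-- Main real-valued estimate, for measurable `u` with finite Gagliardo integral. -/
lemma main_est (hn : 1 ≤ n) {s p : ℝ} (hs : s ∈ Ioo (0 : ℝ) 1) (hp : 1 ≤ p)
    (hsp : (n : ℝ) < s * p) :
    ∃ C : ℝ, 0 < C ∧ ∀ (r : ℝ) (x0 : EuclideanSpace ℝ (Fin n))
      (u : EuclideanSpace ℝ (Fin n) → ℝ), 0 < r → Measurable u →
      ContinuousOn u (ball x0 r) → Gag s p r x0 u ≠ ⊤ →
      ∀ x ∈ ball x0 r, ∀ y ∈ ball x0 r, x ≠ y →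
      |u x - u y| ≤ C * ‖x - y‖ ^ (s - (n : ℝ) / p) * ((Gag s p r x0 u) ^ (1 / p)).toReal := by
  obtain ⟨hs0, hs1⟩ := hs
  have hp0 : (0 : ℝ) < p := lt_of_lt_of_le one_pos hp
  have hα0 : 0 < s - (n : ℝ) / p := by
    rw [sub_pos, div_lt_iff₀ hp0]
    exact hsp
  haveI : Nonempty (Fin n) := ⟨⟨0, hn⟩⟩
  haveI hNT : Nontrivial (EuclideanSpace ℝ (Fin n)) := by
    apply Module.nontrivial_of_finrank_pos (R := ℝ)
    rw [finrank_euclideanSpace_fin]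
    exact hn
  set v : ℝ := (volume (ball (0 : EuclideanSpace ℝ (Fin n)) 1)).toReal with hv
  have hv0 : 0 < v :=
    ENNReal.toReal_pos (measure_ball_pos volume _ one_pos).ne' measure_ball_lt_top.ne
  set θ : ℝ := (2⁻¹ : ℝ) ^ (s - (n : ℝ) / p) with hθdef
  have hθ0 : 0 < θ := Real.rpow_pos_of_pos (by norm_num) _
  have hθ1 : θ < 1 := Real.rpow_lt_one (by norm_num) (by norm_num) hα0
  set K1 : ℝ := (2 : ℝ) ^ (((n : ℝ) + s * p) / p) *
    ((1/4 : ℝ) ^ n * v * ((1/8 : ℝ) ^ n * v)) ^ (-(1 / p)) with hK1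
  set K2 : ℝ := (3 : ℝ) ^ (((n : ℝ) + s * p) / p) *
    ((1/4 : ℝ) ^ n * v * ((1/4 : ℝ) ^ n * v)) ^ (-(1 / p)) with hK2
  have hK10 : 0 < K1 := mul_pos (Real.rpow_pos_of_pos two_pos _)
    (Real.rpow_pos_of_pos (by positivity) _)
  have hK20 : 0 < K2 := mul_pos (Real.rpow_pos_of_pos three_pos _)
    (Real.rpow_pos_of_pos (by positivity) _)
  have h1θ : 0 < (1 - θ)⁻¹ := inv_pos.2 (by linarith)
  refine ⟨2 * (K1 * (1 - θ)⁻¹) + K2, by positivity, ?_⟩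
  intro r x0 u hr hmeas hcont hG x hx y hy hxy
  set d : ℝ := ‖x - y‖ with hd
  have hd0 : 0 < d := by rw [hd]; exact norm_sub_pos_iff.2 hxy
  have hd2r : d < 2 * r := by
    have h1 : dist x x0 < r := mem_ball.1 hx
    have h2 : dist y x0 < r := mem_ball.1 hy
    have h3 : dist x y ≤ dist x x0 + dist x0 y := dist_triangle _ _ _
    rw [dist_comm x0 y] at h3
    rw [hd, ← dist_eq_norm]
    linarith
  set M1 : ℝ := ((Gag s p r x0 u) ^ (1 / p)).toReal with hM1
  have hM10 : 0 ≤ M1 := ENNReal.toReal_nonneg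
  set ctr : EuclideanSpace ℝ (Fin n) → ℝ → EuclideanSpace ℝ (Fin n) :=
    fun t ρ => x0 + (1 - ρ / (2 * r)) • (t - x0) with hctr
  -- geometric facts
  have gsub1 : ∀ t ∈ ball x0 r, ∀ ρ : ℝ, 0 < ρ → ball (ctr t ρ) (ρ / 4) ⊆ ball t ρ := by
    intro t ht ρ hρ w hw
    have htx : ‖t - x0‖ ≤ r := by
      rw [← dist_eq_norm]; exact (mem_ball.1 ht).le
    have hct : ‖ctr t ρ - t‖ ≤ ρ / 2 := by
      have hctq : ctr t ρ - t = (-(ρ / (2 * r))) • (t - x0) := by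
        rw [hctr]; module
      rw [hctq, norm_smul, Real.norm_eq_abs, abs_neg, abs_of_nonneg (by positivity)]
      calc ρ / (2 * r) * ‖t - x0‖ ≤ ρ / (2 * r) * r :=
            mul_le_mul_of_nonneg_left htx (by positivity)
        _ = ρ / 2 := by field_simp
    rw [mem_ball] at hw ⊢
    have hct' : dist (ctr t ρ) t ≤ ρ / 2 := by rwa [dist_eq_norm]
    calc dist w t ≤ dist w (ctr t ρ) + dist (ctr t ρ) t := dist_triangle _ _ _
      _ < ρ / 4 + ρ / 2 := by linarith
      _ ≤ ρ := by linarith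
  have gsub2 : ∀ t ∈ ball x0 r, ∀ ρ : ℝ, 0 < ρ → ρ ≤ 2 * r →
      closedBall (ctr t ρ) (ρ / 4) ⊆ ball x0 r := by
    intro t ht ρ hρ hρ2 w hw
    have htx : ‖t - x0‖ ≤ r := by
      rw [← dist_eq_norm]; exact (mem_ball.1 ht).le
    have hfrac : ρ / (2 * r) ≤ 1 := by
      rw [div_le_one (by positivity)]; linarith
    have hcx : ‖ctr t ρ - x0‖ ≤ r - ρ / 2 := by
      have hcxq : ctr t ρ - x0 = (1 - ρ / (2 * r)) • (t - x0) := by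
        rw [hctr]; module
      rw [hcxq, norm_smul, Real.norm_eq_abs, abs_of_nonneg (by linarith)]
      calc (1 - ρ / (2 * r)) * ‖t - x0‖ ≤ (1 - ρ / (2 * r)) * r :=
            mul_le_mul_of_nonneg_left htx (by linarith)
        _ = r - ρ / 2 := by field_simp
    rw [mem_closedBall] at hw
    rw [mem_ball]
    have hcx' : dist (ctr t ρ) x0 ≤ r - ρ / 2 := by rwa [dist_eq_norm]
    calc dist w x0 ≤ dist w (ctr t ρ) + dist (ctr t ρ) x0 := dist_triangle _ _ _
      _ ≤ ρ / 4 + (r - ρ / 2) := by linarith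
      _ < r := by linarith
  have gmeas : ∀ (c : EuclideanSpace ℝ (Fin n)) (ρ' : ℝ), 0 ≤ ρ' →
      (volume (ball c ρ')).toReal = ρ' ^ n * v := by
    intro c ρ' hρ'
    rw [Measure.addHaar_ball volume c hρ', finrank_euclideanSpace_fin, ENNReal.toReal_mul,
      ENNReal.toReal_ofReal (by positivity), hv]
  -- endpoint estimate via telescoping
  have endpoint : ∀ t ∈ ball x0 r,
      |u t - ⨍ a in ball (ctr t d) (d / 4), u a| ≤
        K1 * (1 - θ)⁻¹ * (d ^ (s - (n : ℝ) / p) * M1) := by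
    intro t ht
    set ρ : ℕ → ℝ := fun k => d * 2⁻¹ ^ k with hρdef
    have hρpos : ∀ k, 0 < ρ k := fun k => mul_pos hd0 (pow_pos (by norm_num) k)
    have hρle : ∀ k, ρ k ≤ d := fun k => by
      have h1 : d * 2⁻¹ ^ k ≤ d * 1 :=
        mul_le_mul_of_nonneg_left (pow_le_one₀ (by norm_num) (by norm_num)) hd0.le
      rw [mul_one] at h1
      exact h1
    have hρ2r : ∀ k, ρ k ≤ 2 * r := fun k => (hρle k).trans hd2r.le
    have hρsucc : ∀ k, ρ (k + 1) = 2⁻¹ * ρ k := fun k => by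
      show d * 2⁻¹ ^ (k + 1) = 2⁻¹ * (d * 2⁻¹ ^ k)
      rw [pow_succ]; ring
    set F : ℕ → ℝ := fun k => ⨍ a in ball (ctr t (ρ k)) (ρ k / 4), u a with hF
    have chain : ∀ k, |F k - F (k + 1)| ≤ K1 * θ ^ k * (d ^ (s - (n : ℝ) / p) * M1) := by
      intro k
      have hDk : ∀ a ∈ ball (ctr t (ρ k)) (ρ k / 4),
          ∀ b ∈ ball (ctr t (ρ (k + 1))) (ρ (k + 1) / 4), ‖a - b‖ ≤ 2 * ρ k := by
        intro a ha b hb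
        have ha' : dist a t < ρ k := mem_ball.1 (gsub1 t ht (ρ k) (hρpos k) ha)
        have hb' : dist b t < ρ (k + 1) := mem_ball.1 (gsub1 t ht (ρ (k + 1)) (hρpos (k + 1)) hb)
        have hby : ρ (k + 1) ≤ ρ k := by
          rw [hρsucc k]; nlinarith [hρpos k]
        rw [← dist_eq_norm]
        calc dist a b ≤ dist a t + dist t b := dist_triangle _ _ _
          _ = dist a t + dist b t := by rw [dist_comm t b]
          _ ≤ ρ k + ρ k := by linarith
          _ = 2 * ρ k := by ring
      have happ := core hs0 hp hmeas hcont
        (by positivity : (0:ℝ) < ρ k / 4) (by positivity : (0:ℝ) < ρ (k + 1) / 4)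
        (gsub2 t ht (ρ k) (hρpos k) (hρ2r k))
        (gsub2 t ht (ρ (k + 1)) (hρpos (k + 1)) (hρ2r (k + 1)))
        (by positivity : (0:ℝ) < 2 * ρ k) hDk hG
      rw [gmeas _ _ (by positivity), gmeas _ _ (by positivity)] at happ
      refine happ.trans (le_of_eq ?_)
      have h1 : ρ k / 4 = 1/4 * ρ k := by ring
      have h2 : ρ (k + 1) / 4 = 1/8 * ρ k := by rw [hρsucc k]; ring
      rw [h1, h2, alg hp0 (1/4) (1/8) 2 (hρpos k) hv0 (by norm_num) (by norm_num) (by norm_num),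
        ← hK1]
      have h3 : (ρ k : ℝ) ^ (s - (n : ℝ) / p) = d ^ (s - (n : ℝ) / p) * θ ^ k := by
        show (d * 2⁻¹ ^ k) ^ (s - (n : ℝ) / p) = d ^ (s - (n : ℝ) / p) * θ ^ k
        rw [Real.mul_rpow hd0.le (by positivity), pow_rpow_comm (by norm_num) k _, hθdef]
      rw [h3]
      ring
    have geo : ∀ K : ℕ, ∑ i ∈ Finset.range K, θ ^ i ≤ (1 - θ)⁻¹ := by
      intro K
      have h1 : ∑ i ∈ Finset.range K, θ ^ i ≤ ∑' i : ℕ, θ ^ i :=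
        Summable.sum_le_tsum _ (fun i _ => (pow_nonneg hθ0.le i))
          (summable_geometric_of_lt_one hθ0.le hθ1)
      rwa [tsum_geometric_of_lt_one hθ0.le hθ1] at h1
    have tele : ∀ K : ℕ, |F 0 - F K| ≤ K1 * (1 - θ)⁻¹ * (d ^ (s - (n : ℝ) / p) * M1) := by
      intro K
      calc |F 0 - F K| = dist (F 0) (F K) := (Real.dist_eq _ _).symm
        _ ≤ ∑ i ∈ Finset.range K, dist (F i) (F (i + 1)) := dist_le_range_sum_dist F K
        _ ≤ ∑ i ∈ Finset.range K, K1 * θ ^ i * (d ^ (s - (n : ℝ) / p) * M1) :=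
            Finset.sum_le_sum fun i _ => by rw [Real.dist_eq]; exact chain i
        _ = K1 * (d ^ (s - (n : ℝ) / p) * M1) * ∑ i ∈ Finset.range K, θ ^ i := by
            rw [Finset.mul_sum]
            exact Finset.sum_congr rfl fun i _ => by ring
        _ ≤ K1 * (d ^ (s - (n : ℝ) / p) * M1) * (1 - θ)⁻¹ := by
            apply mul_le_mul_of_nonneg_left (geo K)
            exact mul_nonneg hK10.le (mul_nonneg (Real.rpow_nonneg hd0.le _) hM10)
        _ = K1 * (1 - θ)⁻¹ * (d ^ (s - (n : ℝ) / p) * M1) := by ring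
    have hlim : Filter.Tendsto F Filter.atTop (nhds (u t)) := by
      rw [Metric.tendsto_atTop]
      intro ε hε
      obtain ⟨δ, hδ0, hδ⟩ := Metric.continuousWithinAt_iff.1 (hcont t ht) (ε / 2) (by linarith)
      obtain ⟨N, hN⟩ := exists_pow_lt_of_lt_one (div_pos hδ0 hd0) (by norm_num : (2⁻¹ : ℝ) < 1)
      refine ⟨N, fun K hK => ?_⟩
      have hρK : ρ K < δ := by
        have hmono : (2⁻¹ : ℝ) ^ K ≤ 2⁻¹ ^ N :=
          pow_le_pow_of_le_one (by norm_num) (by norm_num) hK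
        calc ρ K ≤ d * 2⁻¹ ^ N := mul_le_mul_of_nonneg_left hmono hd0.le
          _ < d * (δ / d) := mul_lt_mul_of_pos_left hN hd0
          _ = δ := by field_simp
      have hIK : IntegrableOn u (ball (ctr t (ρ K)) (ρ K / 4)) :=
        ((hcont.mono (gsub2 t ht (ρ K) (hρpos K) (hρ2r K))).integrableOn_compact
          (isCompact_closedBall _ _)).mono_set ball_subset_closedBall
      have hmb0 : volume (ball (ctr t (ρ K)) (ρ K / 4)) ≠ 0 :=
        (measure_ball_pos volume _ (by positivity)).ne'
      have hmbt : volume (ball (ctr t (ρ K)) (ρ K / 4)) ≠ ⊤ := measure_ball_lt_top.ne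
      have hmbr : 0 < (volume (ball (ctr t (ρ K)) (ρ K / 4))).toReal :=
        ENNReal.toReal_pos hmb0 hmbt
      have hbd : ∀ z ∈ ball (ctr t (ρ K)) (ρ K / 4), ‖u z - u t‖ ≤ ε / 2 := by
        intro z hz
        have h1 : z ∈ ball x0 r :=
          ball_subset_closedBall.trans (gsub2 t ht (ρ K) (hρpos K) (hρ2r K)) hz
        have h2 : dist z t < δ :=
          lt_trans (mem_ball.1 (gsub1 t ht (ρ K) (hρpos K) hz)) hρK
        have h3 := hδ h1 h2
        rw [Real.dist_eq] at h3
        rw [Real.norm_eq_abs]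
        exact h3.le
      have heq : F K - u t = ((volume (ball (ctr t (ρ K)) (ρ K / 4))).toReal)⁻¹ •
          (∫ z in ball (ctr t (ρ K)) (ρ K / 4), (u z - u t) ∂volume) := by
        rw [integral_sub hIK (integrableOn_const (C := u t) measure_ball_lt_top.ne),
          setIntegral_const]
        show (⨍ a in ball (ctr t (ρ K)) (ρ K / 4), u a) - u t = _
        rw [setAverage_eq, smul_sub, smul_smul, measureReal_def, inv_mul_cancel₀ hmbr.ne', one_smul]
      rw [Real.dist_eq]
      have hnorm : ‖∫ z in ball (ctr t (ρ K)) (ρ K / 4), (u z - u t) ∂volume‖ ≤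
          ε / 2 * (volume (ball (ctr t (ρ K)) (ρ K / 4))).toReal :=
        norm_setIntegral_le_of_norm_le_const measure_ball_lt_top hbd
      calc |F K - u t|
          = ((volume (ball (ctr t (ρ K)) (ρ K / 4))).toReal)⁻¹ *
            |∫ z in ball (ctr t (ρ K)) (ρ K / 4), (u z - u t) ∂volume| := by
            rw [heq, smul_eq_mul, abs_mul, abs_inv, abs_of_nonneg ENNReal.toReal_nonneg]
        _ ≤ ((volume (ball (ctr t (ρ K)) (ρ K / 4))).toReal)⁻¹ *
            (ε / 2 * (volume (ball (ctr t (ρ K)) (ρ K / 4))).toReal) := by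
            apply mul_le_mul_of_nonneg_left _ (inv_nonneg.2 ENNReal.toReal_nonneg)
            rw [← Real.norm_eq_abs]
            exact hnorm
        _ = ε / 2 := by field_simp
        _ < ε := by linarith
    have hlim2 : Filter.Tendsto (fun K => |F 0 - F K|) Filter.atTop (nhds |F 0 - u t|) :=
      (tendsto_const_nhds.sub hlim).abs
    have hfin : |F 0 - u t| ≤ K1 * (1 - θ)⁻¹ * (d ^ (s - (n : ℝ) / p) * M1) :=
      le_of_tendsto' hlim2 tele
    rw [abs_sub_comm] at hfin
    have hF0 : F 0 = ⨍ a in ball (ctr t d) (d / 4), u a := by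
      have hρ0 : ρ 0 = d := by
        show d * 2⁻¹ ^ 0 = d
        simp
      show (⨍ a in ball (ctr t (ρ 0)) (ρ 0 / 4), u a) = _
      rw [hρ0]
    rw [← hF0]
    exact hfin
  -- middle estimate
  have mid : |(⨍ a in ball (ctr x d) (d / 4), u a) - ⨍ b in ball (ctr y d) (d / 4), u b| ≤
      K2 * (d ^ (s - (n : ℝ) / p) * M1) := by
    have hDm : ∀ a ∈ ball (ctr x d) (d / 4), ∀ b ∈ ball (ctr y d) (d / 4),
        ‖a - b‖ ≤ 3 * d := by
      intro a ha b hb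
      have ha' : dist a x < d := mem_ball.1 (gsub1 x hx d hd0 ha)
      have hb' : dist b y < d := mem_ball.1 (gsub1 y hy d hd0 hb)
      have hxy' : dist x y = d := by rw [hd, dist_eq_norm]
      rw [← dist_eq_norm]
      calc dist a b ≤ dist a x + dist x b := dist_triangle _ _ _
        _ ≤ dist a x + (dist x y + dist y b) := by linarith [dist_triangle x y b]
        _ = dist a x + dist x y + dist b y := by rw [dist_comm y b]; ring
        _ ≤ d + d + d := by linarith
        _ = 3 * d := by ring
    have happ := core hs0 hp hmeas hcont (by positivity : (0:ℝ) < d / 4)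
      (by positivity : (0:ℝ) < d / 4) (gsub2 x hx d hd0 hd2r.le) (gsub2 y hy d hd0 hd2r.le)
      (by positivity : (0:ℝ) < 3 * d) hDm hG
    rw [gmeas _ _ (by positivity), gmeas _ _ (by positivity)] at happ
    refine happ.trans (le_of_eq ?_)
    have h1 : d / 4 = 1/4 * d := by ring
    rw [h1, alg hp0 (1/4) (1/4) 3 hd0 hv0 (by norm_num) (by norm_num) (by norm_num), ← hK2]
    ring
  -- conclusion
  have t1 := endpoint x hx
  have t2 := endpoint y hy
  have habs : |u x - u y| ≤ |u x - ⨍ a in ball (ctr x d) (d / 4), u a| +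
      |(⨍ a in ball (ctr x d) (d / 4), u a) - ⨍ b in ball (ctr y d) (d / 4), u b| +
      |u y - ⨍ b in ball (ctr y d) (d / 4), u b| := by
    have h1 := abs_sub_le (u x) (⨍ a in ball (ctr x d) (d / 4), u a) (u y)
    have h2 := abs_sub_le (⨍ a in ball (ctr x d) (d / 4), u a)
      (⨍ b in ball (ctr y d) (d / 4), u b) (u y)
    have h3 : |(⨍ b in ball (ctr y d) (d / 4), u b) - u y|
        = |u y - ⨍ b in ball (ctr y d) (d / 4), u b| := abs_sub_comm _ _
    linarith
  calc |u x - u y| ≤ _ := habs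
    _ ≤ K1 * (1 - θ)⁻¹ * (d ^ (s - (n : ℝ) / p) * M1) + K2 * (d ^ (s - (n : ℝ) / p) * M1)
        + K1 * (1 - θ)⁻¹ * (d ^ (s - (n : ℝ) / p) * M1) :=
      add_le_add (add_le_add t1 mid) t2
    _ = (2 * (K1 * (1 - θ)⁻¹) + K2) * d ^ (s - (n : ℝ) / p) * M1 := by ring

end

end Stmt4Aux

open Stmt4Aux in
/-- Scaled Hölder embedding on balls: if `sp > n`, then for every ball `B_r(x₀)` and every
(continuous representative of a) function `u ∈ W^{s,p}(B_r(x₀))`, the Hölder seminorm of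
exponent `s - n/p` is controlled by the Gagliardo seminorm, with a constant depending only
on `n`, `s` and `p` (in particular independent of `r` and `x₀`). -/
theorem stmt_4 (n : ℕ) (hn : 1 ≤ n) (s p : ℝ) (hs : s ∈ Ioo (0 : ℝ) 1) (hp : 1 ≤ p)
    (hsp : (n : ℝ) < s * p) :
    ∃ C : ℝ, 0 < C ∧ ∀ (r : ℝ) (x0 : EuclideanSpace ℝ (Fin n))
      (u : EuclideanSpace ℝ (Fin n) → ℝ), 0 < r → ContinuousOn u (ball x0 r) →
      ∀ x ∈ ball x0 r, ∀ y ∈ ball x0 r, x ≠ y →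
      ENNReal.ofReal (|u x - u y|) ≤
        ENNReal.ofReal C * ENNReal.ofReal (‖x - y‖ ^ (s - (n : ℝ) / p)) *
          (∫⁻ a in ball x0 r, ∫⁻ b in ball x0 r,
            ENNReal.ofReal (|u a - u b| ^ p / ‖a - b‖ ^ ((n : ℝ) + s * p))) ^ (1 / p) := by
  classical
  obtain ⟨C, hC0, hC⟩ := Stmt4Aux.main_est hn hs hp hsp
  refine ⟨C, hC0, ?_⟩
  intro r x0 u hr hcont x hx y hy hxy
  obtain ⟨w, hwmeas, hweq⟩ := Stmt4Aux.meas_ext isOpen_ball hcont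
  have hwcont : ContinuousOn w (ball x0 r) := hcont.congr hweq
  have hGeq : (∫⁻ a in ball x0 r, ∫⁻ b in ball x0 r,
      ENNReal.ofReal (|u a - u b| ^ p / ‖a - b‖ ^ ((n : ℝ) + s * p)))
      = Gag s p r x0 w := by
    rw [Gag]
    apply setLIntegral_congr_fun measurableSet_ball
    intro a ha
    apply setLIntegral_congr_fun measurableSet_ball
    intro b hb
    dsimp only
    rw [hweq a ha, hweq b hb]
  rw [hGeq, show |u x - u y| = |w x - w y| by rw [hweq x hx, hweq y hy]]
  by_cases hG : Gag s p r x0 w = ⊤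
  · rw [hG]
    have hp0 : (0 : ℝ) < p := lt_of_lt_of_le one_pos hp
    have h1 : (⊤ : ℝ≥0∞) ^ (1 / p) = ⊤ := ENNReal.top_rpow_of_pos (by positivity)
    rw [h1, ENNReal.mul_top]
    · exact le_top
    · apply mul_ne_zero
      · exact (ENNReal.ofReal_pos.2 hC0).ne'
      · exact (ENNReal.ofReal_pos.2
          (Real.rpow_pos_of_pos (norm_sub_pos_iff.2 hxy) _)).ne'
  · have hre := hC r x0 w hr hwmeas hwcont hG x hx y hy hxy
    have hb1 : (0:ℝ) ≤ C * ‖x - y‖ ^ (s - (n : ℝ) / p) :=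
      mul_nonneg hC0.le (Real.rpow_nonneg (norm_nonneg _) _)
    calc ENNReal.ofReal |w x - w y|
        ≤ ENNReal.ofReal (C * ‖x - y‖ ^ (s - (n : ℝ) / p) *
            ((Gag s p r x0 w) ^ (1 / p)).toReal) := ENNReal.ofReal_le_ofReal hre
      _ = ENNReal.ofReal C * ENNReal.ofReal (‖x - y‖ ^ (s - (n : ℝ) / p)) *
            (Gag s p r x0 w) ^ (1 / p) := by
          rw [ENNReal.ofReal_mul hb1, ENNReal.ofReal_mul hC0.le,
            ENNReal.ofReal_toReal (ENNReal.rpow_ne_top_of_nonneg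
              (one_div_nonneg.2 (lt_of_lt_of_le one_pos hp).le) hG)]
end

section
/- The function A(x,y) = sin(|log(|x|+|y|)|^α) + 2 for (x,y) ≠ (0,0) (extended by 0 at the origin), with α ∈ (0,1), is of vanishing mean oscillation near the origin in the following quantitative sense: for every δ > 0 there exists R > 0 such that for all ρ ∈ (0,R] and all x0, y0 ∈ B_R(0) with B_ρ(x0) ∪ B_ρ(y0) ⊆ B_R(0), ⨍_{B_ρ(x0)} ⨍_{B_ρ(y0)} |A(x,y) − Ā_{ρ,x0,y0}| dy dx ≤ δ; yet A is discontinuous at (0,0). -/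
open MeasureTheory Metric Set

private lemma aux_rpow_mvt {a u v : ℝ} (ha0 : 0 < a) (ha1 : a ≤ 1) (hu : 0 < u) (huv : u ≤ v) :
    v ^ a - u ^ a ≤ a * u ^ (a - 1) * (v - u) := by
  have hderiv : ∀ x ∈ Ici u, HasDerivWithinAt (fun x : ℝ => x ^ a)
      (a * x ^ (a - 1)) (Ici u) x := by
    intro x hx
    exact (Real.hasDerivAt_rpow_const (Or.inl (ne_of_gt (lt_of_lt_of_le hu hx)))).hasDerivWithinAt
  have hbound : ∀ x ∈ Ici u, ‖a * x ^ (a - 1)‖ ≤ a * u ^ (a - 1) := by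
    intro x hx
    rw [Real.norm_eq_abs, abs_mul, abs_of_nonneg ha0.le,
      abs_of_nonneg (Real.rpow_nonneg (le_trans hu.le hx) _)]
    exact mul_le_mul_of_nonneg_left
      (Real.rpow_le_rpow_of_nonpos hu hx (by linarith)) ha0.le
  have h := (convex_Ici u).norm_image_sub_le_of_norm_hasDerivWithin_le hderiv hbound
    self_mem_Ici (mem_Ici.mpr huv)
  rw [Real.norm_eq_abs, Real.norm_eq_abs, abs_of_nonneg (by linarith : (0:ℝ) ≤ v - u)] at h
  calc v ^ a - u ^ a ≤ |v ^ a - u ^ a| := le_abs_self _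
    _ ≤ a * u ^ (a - 1) * (v - u) := h

private lemma aux_sin_lip (a b : ℝ) : |Real.sin a - Real.sin b| ≤ |a - b| := by
  have hderiv : ∀ x ∈ (univ : Set ℝ), HasDerivWithinAt Real.sin (Real.cos x) univ x :=
    fun x _ => (Real.hasDerivAt_sin x).hasDerivWithinAt
  have hbound : ∀ x ∈ (univ : Set ℝ), ‖Real.cos x‖ ≤ 1 := fun x _ => by
    rw [Real.norm_eq_abs]; exact Real.abs_cos_le_one x
  have h := convex_univ.norm_image_sub_le_of_norm_hasDerivWithin_le hderiv hbound
    (mem_univ b) (mem_univ a)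
  simpa [Real.norm_eq_abs] using h

private lemma aux_avg {X : Type*} [MeasurableSpace X] (μ : Measure X) [IsFiniteMeasure μ]
    [NeZero μ] (f : X → ℝ) (hf : Integrable f μ) (c : ℝ) :
    ⨍ x, |f x - ⨍ y, f y ∂μ| ∂μ ≤ 2 * ⨍ x, |f x - c| ∂μ := by
  set m := ⨍ y, f y ∂μ with hm
  set V := (μ univ).toReal with hV
  have hVpos : 0 < V := by
    refine ENNReal.toReal_pos ?_ (measure_ne_top μ univ)
    simpa [Measure.measure_univ_eq_zero] using (NeZero.ne μ)
  have hInt1 : Integrable (fun x => |f x - c|) μ := (hf.sub (integrable_const c)).abs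
  have hInt2 : Integrable (fun x => |f x - m|) μ := (hf.sub (integrable_const m)).abs
  have hsub : ∫ x, (f x - c) ∂μ = (∫ x, f x ∂μ) - V * c := by
    rw [integral_sub hf (integrable_const c), integral_const, smul_eq_mul]; rfl
  have hmV : m = V⁻¹ * ∫ x, f x ∂μ := by rw [hm, average_eq, smul_eq_mul]; rfl
  have hmc : |m - c| ≤ ⨍ x, |f x - c| ∂μ := by
    have h1 : m - c = V⁻¹ * ∫ x, (f x - c) ∂μ := by
      rw [hsub, hmV]; field_simp
    rw [h1, average_eq, smul_eq_mul]
    rw [abs_mul, abs_of_nonneg (inv_nonneg.mpr hVpos.le)]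
    refine mul_le_mul_of_nonneg_left ?_ (inv_nonneg.mpr hVpos.le)
    simpa [Real.norm_eq_abs] using norm_integral_le_integral_norm (μ := μ) (fun x => f x - c)
  have hpt : ∀ x, |f x - m| ≤ |f x - c| + |m - c| := by
    intro x
    calc |f x - m| ≤ |f x - c| + |c - m| := abs_sub_le _ _ _
      _ = |f x - c| + |m - c| := by rw [abs_sub_comm c m]
  have hmono : ⨍ x, |f x - m| ∂μ ≤ ⨍ x, (|f x - c| + |m - c|) ∂μ := by
    rw [average_eq, average_eq, smul_eq_mul, smul_eq_mul]
    refine mul_le_mul_of_nonneg_left ?_ (inv_nonneg.mpr hVpos.le)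
    exact integral_mono hInt2 (hInt1.add (integrable_const _)) hpt
  have hadd : ⨍ x, (|f x - c| + |m - c|) ∂μ = (⨍ x, |f x - c| ∂μ) + |m - c| := by
    rw [average_eq, average_eq, integral_add hInt1 (integrable_const _), integral_const,
      smul_eq_mul, smul_eq_mul, smul_eq_mul]
    have hVr : μ.real univ ≠ 0 := hVpos.ne'
    field_simp
  calc ⨍ x, |f x - m| ∂μ ≤ (⨍ x, |f x - c| ∂μ) + |m - c| := by rw [← hadd]; exact hmono
    _ ≤ 2 * ⨍ x, |f x - c| ∂μ := by linarith

set_option maxHeartbeats 1600000 in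
/-- The coefficient `A(x,y) = sin(|log(|x|+|y|)|^α) + 2` for `(x,y) ≠ (0,0)` (extended by
`0` at the origin), with `α ∈ (0,1)`, has vanishing mean oscillation near the origin in the
two-ball quantitative sense, yet is discontinuous at the origin. -/
theorem stmt_16 (n : ℕ) (hn : 1 ≤ n) (α : ℝ) (hα : α ∈ Ioo (0 : ℝ) 1)
    (A : EuclideanSpace ℝ (Fin n) × EuclideanSpace ℝ (Fin n) → ℝ)
    (hA : ∀ q : EuclideanSpace ℝ (Fin n) × EuclideanSpace ℝ (Fin n), q ≠ 0 →
      A q = Real.sin (|Real.log (‖q.1‖ + ‖q.2‖)| ^ α) + 2)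
    (hA0 : A 0 = 0) :
    (∀ δ : ℝ, 0 < δ → ∃ R : ℝ, 0 < R ∧
      ∀ ρ : ℝ, 0 < ρ → ρ ≤ R →
      ∀ x0 y0 : EuclideanSpace ℝ (Fin n),
        x0 ∈ ball (0 : EuclideanSpace ℝ (Fin n)) R →
        y0 ∈ ball (0 : EuclideanSpace ℝ (Fin n)) R →
        ball x0 ρ ⊆ ball (0 : EuclideanSpace ℝ (Fin n)) R →
        ball y0 ρ ⊆ ball (0 : EuclideanSpace ℝ (Fin n)) R →
        (⨍ q in ball x0 ρ ×ˢ ball y0 ρ,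
            |A q - ⨍ q' in ball x0 ρ ×ˢ ball y0 ρ, A q'|) ≤ δ) ∧
    ¬ ContinuousAt A 0 := by
  obtain ⟨hα0, hα1⟩ := hα
  haveI : NeZero n := ⟨by omega⟩
  haveI hnontriv : Nontrivial (EuclideanSpace ℝ (Fin n)) := by infer_instance
  set f : (EuclideanSpace ℝ (Fin n) × EuclideanSpace ℝ (Fin n)) → ℝ :=
    fun q => Real.sin (|Real.log (‖q.1‖ + ‖q.2‖)| ^ α) + 2 with hfdef
  have hf_meas : Measurable f := by
    have h1 : Measurable fun q : EuclideanSpace ℝ (Fin n) × EuclideanSpace ℝ (Fin n) =>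
        ‖q.1‖ + ‖q.2‖ := (continuous_fst.norm.add continuous_snd.norm).measurable
    have h2 : Measurable fun q : EuclideanSpace ℝ (Fin n) × EuclideanSpace ℝ (Fin n) =>
        |Real.log (‖q.1‖ + ‖q.2‖)| ^ α :=
      (Real.continuous_rpow_const (le_of_lt hα0)).measurable.comp
        (Real.measurable_log.comp h1).abs
    exact (Real.measurable_sin.comp h2).add measurable_const
  have hf_bdd : ∀ q, ‖f q‖ ≤ 3 := by
    intro q
    rw [Real.norm_eq_abs, abs_le]
    constructor <;> simp only [hfdef] <;>
      nlinarith [Real.neg_one_le_sin (|Real.log (‖q.1‖ + ‖q.2‖)| ^ α),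
        Real.sin_le_one (|Real.log (‖q.1‖ + ‖q.2‖)| ^ α)]
  have hAf : ∀ᵐ q ∂(volume : Measure (EuclideanSpace ℝ (Fin n) × EuclideanSpace ℝ (Fin n))),
      A q = f q := by
    have hsingle : (volume : Measure (EuclideanSpace ℝ (Fin n) × EuclideanSpace ℝ (Fin n)))
        {0} = 0 := by
      have heq : ({0} : Set (EuclideanSpace ℝ (Fin n) × EuclideanSpace ℝ (Fin n)))
          = ({0} : Set (EuclideanSpace ℝ (Fin n))) ×ˢ ({0} : Set (EuclideanSpace ℝ (Fin n))) := by
        ext q; simp [Prod.ext_iff]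
      rw [heq, Measure.volume_eq_prod _ _, Measure.prod_prod, measure_singleton, zero_mul]
    have hsubset : {q : EuclideanSpace ℝ (Fin n) × EuclideanSpace ℝ (Fin n) | ¬ A q = f q}
        ⊆ {0} := by
      intro q hq
      by_contra hne
      exact hq (hA q (by simpa using hne))
    exact (measure_mono_null hsubset hsingle)
  constructor
  · intro δ hδ
    set θ : ℝ := min 1 (δ / 16) with hθdef
    have hθ0 : 0 < θ := lt_min one_pos (by positivity)
    have hθ1 : θ ≤ 1 := min_le_left _ _
    have hθδ : θ ≤ δ / 16 := min_le_right _ _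
    have hlog6 : 0 < Real.log (6 / θ) := by
      apply Real.log_pos
      rw [lt_div_iff₀ hθ0]
      linarith
    set C : ℝ := 8 * α * Real.log (6 / θ) / δ with hCdef
    have hC : 0 < C := by positivity
    set M : ℝ := max 1 (C ^ ((1:ℝ) / (1 - α))) with hMdef
    have hM1 : 1 ≤ M := le_max_left _ _
    have hM0 : 0 < M := lt_of_lt_of_le one_pos hM1
    have hMC : C ≤ M ^ (1 - α) := by
      have h1 : C ^ ((1:ℝ) / (1 - α)) ≤ M := le_max_right _ _
      have h2 : (C ^ ((1:ℝ) / (1 - α))) ^ (1 - α) ≤ M ^ (1 - α) :=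
        Real.rpow_le_rpow (Real.rpow_nonneg hC.le _) h1 (by linarith)
      rwa [← Real.rpow_mul hC.le, one_div_mul_cancel (by linarith : (1:ℝ) - α ≠ 0),
        Real.rpow_one] at h2
    set K : ℝ := α * Real.log (6 / θ) * M ^ (α - 1) with hKdef
    have hMα : 0 < M ^ (α - 1) := Real.rpow_pos_of_pos hM0 _
    have hK0 : 0 ≤ K := by positivity
    have hK : K ≤ δ / 8 := by
      have hpow : 0 < M ^ (1 - α) := Real.rpow_pos_of_pos hM0 _
      have hmne : M ^ (α - 1) = (M ^ (1 - α))⁻¹ := by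
        rw [← Real.rpow_neg hM0.le]
        norm_num
      have h8 : 8 * α * Real.log (6 / θ) = δ * C := by
        rw [hCdef]; field_simp
      have h9 : δ * C ≤ δ * M ^ (1 - α) := mul_le_mul_of_nonneg_left hMC hδ.le
      rw [hKdef, hmne, mul_comm (α * Real.log (6 / θ)) _, ← div_eq_inv_mul, div_le_iff₀ hpow]
      nlinarith
    set R : ℝ := Real.exp (-M) / 4 with hRdef
    have hRpos : 0 < R := by positivity
    refine ⟨R, hRpos, ?_⟩
    intro ρ hρ hρR x0 y0 hx0 hy0 _ _
    rw [mem_ball, dist_zero_right] at hx0 hy0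
    have h4R : 4 * R = Real.exp (-M) := by rw [hRdef]; ring
    have hlog4R : Real.log (4 * R) = -M := by rw [h4R, Real.log_exp]
    set S : ℝ := ‖x0‖ + ‖y0‖ + 2 * ρ with hSdef
    have hS0 : 0 < S := by positivity
    have hS4R : S < 4 * R := by
      have h1 : 0 ≤ ‖x0‖ := norm_nonneg _
      have h2 : 0 ≤ ‖y0‖ := norm_nonneg _
      simp only [hSdef]; linarith
    have h4R1 : 4 * R ≤ 1 := by
      rw [h4R]; exact Real.exp_le_one_iff.mpr (by linarith)
    have hS1 : S < 1 := lt_of_lt_of_le hS4R h4R1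
    have hlogS : Real.log S < 0 := Real.log_neg hS0 hS1
    have hMlogS : M ≤ -Real.log S := by
      have := Real.log_le_log hS0 hS4R.le
      rw [hlog4R] at this
      linarith
    set c : ℝ := Real.sin ((-Real.log S) ^ α) + 2 with hcdef
    set s : Set (EuclideanSpace ℝ (Fin n) × EuclideanSpace ℝ (Fin n)) :=
      ball x0 ρ ×ˢ ball y0 ρ with hsdef
    have hs_meas : MeasurableSet s := measurableSet_ball.prod measurableSet_ball
    have hvol : volume s = volume (ball x0 ρ) * volume (ball y0 ρ) := by
      rw [hsdef, Measure.volume_eq_prod _ _, Measure.prod_prod]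
    have hμpos : volume s ≠ 0 := by
      rw [hvol]
      exact (ENNReal.mul_pos (measure_ball_pos volume x0 hρ).ne'
        (measure_ball_pos volume y0 hρ).ne').ne'
    have hμfin : volume s ≠ ⊤ := by
      rw [hvol]
      exact (ENNReal.mul_lt_top measure_ball_lt_top measure_ball_lt_top).ne
    set V : ℝ := (volume s).toReal with hVdef
    have hV0 : 0 < V := ENNReal.toReal_pos hμpos hμfin
    haveI hfin : IsFiniteMeasure (volume.restrict s) :=
      ⟨by rw [Measure.restrict_apply_univ]; exact lt_top_iff_ne_top.mpr hμfin⟩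
    haveI hnz : NeZero (volume.restrict s) :=
      ⟨fun h => hμpos (Measure.restrict_eq_zero.mp h)⟩
    have hf_int : IntegrableOn f s volume :=
      Measure.integrableOn_of_bounded hμfin hf_meas.aestronglyMeasurable
        (ae_of_all _ fun q => hf_bdd q)
    -- rewrite the goal in terms of f
    have hAfr : A =ᵐ[volume.restrict s] f := ae_restrict_of_ae hAf
    have havg : (⨍ q' in s, A q') = ⨍ q' in s, f q' := average_congr hAfr
    have hgoal_eq : (⨍ q in s, |A q - ⨍ q' in s, A q'|)
        = ⨍ q in s, |f q - ⨍ q' in s, f q'| := by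
      rw [havg]
      exact average_congr (hAfr.mono fun q hq => by simp only [hq])
    rw [hgoal_eq]
    -- the bad set
    set bad : Set (EuclideanSpace ℝ (Fin n) × EuclideanSpace ℝ (Fin n)) :=
      {q | ‖q.1‖ + ‖q.2‖ < θ * ρ} with hbaddef
    have hbad_meas : MeasurableSet bad := by
      have hc : Continuous fun q : EuclideanSpace ℝ (Fin n) × EuclideanSpace ℝ (Fin n) =>
        ‖q.1‖ + ‖q.2‖ := continuous_fst.norm.add continuous_snd.norm
      exact measurableSet_lt hc.measurable measurable_const
    -- pointwise bound on s
    have hbound : ∀ q ∈ s, |f q - c| ≤ K + bad.indicator (fun _ => (2:ℝ)) q := by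
      intro q hq
      rw [hsdef, Set.mem_prod, mem_ball, mem_ball] at hq
      obtain ⟨hq1, hq2⟩ := hq
      rw [dist_eq_norm] at hq1 hq2
      set t : ℝ := ‖q.1‖ + ‖q.2‖ with htdef
      have htS : t ≤ S := by
        have h1 : ‖q.1‖ - ‖x0‖ ≤ ‖q.1 - x0‖ := norm_sub_norm_le _ _
        have h2 : ‖q.2‖ - ‖y0‖ ≤ ‖q.2 - y0‖ := norm_sub_norm_le _ _
        simp only [htdef, hSdef]; linarith
      by_cases hb : q ∈ bad
      · rw [Set.indicator_of_mem hb]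
        have h1 : |f q - c| ≤ 2 := by
          have : f q - c = Real.sin (|Real.log t| ^ α) - Real.sin ((-Real.log S) ^ α) := by
            simp only [hfdef, hcdef, htdef]; ring
          rw [this]
          have := Real.neg_one_le_sin (|Real.log t| ^ α)
          have := Real.sin_le_one (|Real.log t| ^ α)
          have := Real.neg_one_le_sin ((-Real.log S) ^ α)
          have := Real.sin_le_one ((-Real.log S) ^ α)
          rw [abs_le]; constructor <;> linarith
        linarith
      · rw [Set.indicator_of_notMem hb, add_zero]
        have hbad' : θ * ρ ≤ t := by
          rw [hbaddef, Set.mem_setOf_eq, not_lt] at hb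
          exact hb
        have ht0 : 0 < t := lt_of_lt_of_le (by positivity) hbad'
        have ht1 : t < 1 := lt_of_le_of_lt htS hS1
        have hlogt : Real.log t ≤ Real.log S := Real.log_le_log ht0 htS
        have habs_t : |Real.log t| = -Real.log t := abs_of_neg (Real.log_neg ht0 ht1)
        have h6 : θ * S ≤ 6 * t := by
          by_cases hcase : ‖x0‖ + ‖y0‖ ≤ 4 * ρ
          · have hSle : S ≤ 6 * ρ := by simp only [hSdef]; linarith
            calc θ * S ≤ θ * (6 * ρ) := mul_le_mul_of_nonneg_left hSle hθ0.le
              _ = 6 * (θ * ρ) := by ring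
              _ ≤ 6 * t := by linarith
          · push_neg at hcase
            have hq1' : ‖x0‖ - ρ ≤ ‖q.1‖ := by
              have h := norm_sub_norm_le x0 q.1
              rw [norm_sub_rev] at h
              linarith
            have hq2' : ‖y0‖ - ρ ≤ ‖q.2‖ := by
              have h := norm_sub_norm_le y0 q.2
              rw [norm_sub_rev] at h
              linarith
            have ht' : ‖x0‖ + ‖y0‖ - 2 * ρ ≤ t := by simp only [htdef]; linarith
            have hS6t : S ≤ 6 * t := by simp only [hSdef]; linarith
            have h1 : θ * S ≤ 1 * S := mul_le_mul_of_nonneg_right hθ1 hS0.le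
            linarith
        have hlogdiff : Real.log S - Real.log t ≤ Real.log (6 / θ) := by
          have h1 : Real.log (θ * S) ≤ Real.log (6 * t) :=
            Real.log_le_log (by positivity) h6
          rw [Real.log_mul hθ0.ne' hS0.ne', Real.log_mul (by norm_num) ht0.ne'] at h1
          rw [Real.log_div (by norm_num) hθ0.ne']
          linarith
        set u : ℝ := -Real.log S with hudef
        set v : ℝ := -Real.log t with hvdef
        have hu0 : 0 < u := by simp only [hudef]; linarith
        have huv : u ≤ v := by simp only [hudef, hvdef]; linarith
        have hMu : M ≤ u := hMlogS
        have h_eq : f q - c = Real.sin (v ^ α) - Real.sin (u ^ α) := by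
          simp only [hfdef, hcdef, htdef, hvdef, hudef, habs_t]
          rw [show |Real.log (‖q.1‖ + ‖q.2‖)| = -Real.log (‖q.1‖ + ‖q.2‖) from habs_t]
          ring
        rw [h_eq]
        calc |Real.sin (v ^ α) - Real.sin (u ^ α)| ≤ |v ^ α - u ^ α| := aux_sin_lip _ _
          _ = v ^ α - u ^ α :=
            abs_of_nonneg (sub_nonneg.mpr (Real.rpow_le_rpow hu0.le huv hα0.le))
          _ ≤ α * u ^ (α - 1) * (v - u) := aux_rpow_mvt hα0 hα1.le hu0 huv
          _ ≤ K := by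
            have e1 : u ^ (α - 1) ≤ M ^ (α - 1) :=
              Real.rpow_le_rpow_of_nonpos hM0 hMu (by linarith)
            have e2 : v - u ≤ Real.log (6 / θ) := by
              simp only [hudef, hvdef]; linarith
            have e3 : 0 ≤ v - u := by linarith
            have e4 : 0 ≤ u ^ (α - 1) := Real.rpow_nonneg hu0.le _
            calc α * u ^ (α - 1) * (v - u)
                ≤ α * u ^ (α - 1) * Real.log (6 / θ) :=
                  mul_le_mul_of_nonneg_left e2 (by positivity)
              _ ≤ α * M ^ (α - 1) * Real.log (6 / θ) :=
                  mul_le_mul_of_nonneg_right (mul_le_mul_of_nonneg_left e1 hα0.le) hlog6.le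
              _ = K := by rw [hKdef]; ring
    -- integrability
    have hfc_int : IntegrableOn (fun q => |f q - c|) s volume :=
      (hf_int.sub (integrableOn_const hμfin)).abs
    have hg_int : IntegrableOn (fun q => K + bad.indicator (fun _ => (2:ℝ)) q) s volume := by
      refine Integrable.add (integrableOn_const hμfin) ?_
      exact (integrable_const (2:ℝ)).indicator hbad_meas
    -- bad set volume
    have hbadvol : (volume (bad ∩ s)).toReal ≤ θ * V := by
      set box : Set (EuclideanSpace ℝ (Fin n) × EuclideanSpace ℝ (Fin n)) :=
        ball (0 : EuclideanSpace ℝ (Fin n)) (θ * ρ) ×ˢ ball (0 : EuclideanSpace ℝ (Fin n)) (θ * ρ)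
        with hboxdef
      have hsub : bad ∩ s ⊆ box := by
        intro q hq
        obtain ⟨hq1, _⟩ := hq
        rw [hbaddef, Set.mem_setOf_eq] at hq1
        have h1 : 0 ≤ ‖q.1‖ := norm_nonneg _
        have h2 : 0 ≤ ‖q.2‖ := norm_nonneg _
        constructor <;> rw [mem_ball, dist_zero_right] <;> linarith
      have hball : ∀ (x : EuclideanSpace ℝ (Fin n)) (r : ℝ), 0 ≤ r →
          volume (ball x r) = ENNReal.ofReal (r ^ n)
            * volume (ball (0 : EuclideanSpace ℝ (Fin n)) 1) := by
        intro x r hr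
        have h := Measure.addHaar_ball (volume : Measure (EuclideanSpace ℝ (Fin n))) x hr
        rwa [finrank_euclideanSpace_fin] at h
      set b : ℝ := (volume (ball (0 : EuclideanSpace ℝ (Fin n)) 1)).toReal with hbdef
      have hb0 : 0 < b :=
        ENNReal.toReal_pos (measure_ball_pos volume 0 one_pos).ne' measure_ball_lt_top.ne
      have hρn0 : (0:ℝ) ≤ ρ ^ n := by positivity
      have hθρn0 : (0:ℝ) ≤ (θ * ρ) ^ n := by positivity
      have hVe : V = (ρ ^ n * b) * (ρ ^ n * b) := by
        simp only [hVdef, hvol, hball x0 ρ hρ.le, hball y0 ρ hρ.le, ENNReal.toReal_mul,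
          ENNReal.toReal_ofReal hρn0, hbdef]
      have hboxfin : volume box ≠ ⊤ := by
        rw [hboxdef, Measure.volume_eq_prod _ _, Measure.prod_prod]
        exact (ENNReal.mul_lt_top measure_ball_lt_top measure_ball_lt_top).ne
      have hboxval : (volume box).toReal = ((θ * ρ) ^ n * b) * ((θ * ρ) ^ n * b) := by
        rw [hboxdef, Measure.volume_eq_prod _ _, Measure.prod_prod]
        simp only [hball 0 (θ * ρ) (by positivity : (0:ℝ) ≤ θ * ρ), ENNReal.toReal_mul,
          ENNReal.toReal_ofReal hθρn0, hbdef]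
      have h1 : (volume (bad ∩ s)).toReal ≤ (volume box).toReal :=
        ENNReal.toReal_mono hboxfin (measure_mono hsub)
      have hθn : θ ^ n ≤ θ := by
        calc θ ^ n ≤ θ ^ 1 := pow_le_pow_of_le_one hθ0.le hθ1 hn
          _ = θ := pow_one θ
      have hθn1 : θ ^ n ≤ 1 := le_trans hθn hθ1
      have hθnn : 0 ≤ θ ^ n := pow_nonneg hθ0.le n
      have hρn : 0 ≤ ρ ^ n := pow_nonneg hρ.le n
      have hθθ : θ ^ n * θ ^ n ≤ θ := by
        have := mul_le_of_le_one_right hθnn hθn1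
        linarith
      have h2 : ((θ * ρ) ^ n * b) * ((θ * ρ) ^ n * b) ≤ θ * V := by
        rw [hVe, mul_pow]
        calc (θ ^ n * ρ ^ n * b) * (θ ^ n * ρ ^ n * b)
            = (θ ^ n * θ ^ n) * ((ρ ^ n * b) * (ρ ^ n * b)) := by ring
          _ ≤ θ * ((ρ ^ n * b) * (ρ ^ n * b)) :=
              mul_le_mul_of_nonneg_right hθθ (by positivity)
      rw [hboxval] at h1
      linarith
    -- integral bound
    have hIbound : ∫ q in s, |f q - c| ≤ K * V + 2 * (θ * V) := by
      have hmono := setIntegral_mono_on hfc_int hg_int hs_meas hbound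
      have heval : ∫ q in s, (K + bad.indicator (fun _ => (2:ℝ)) q)
          = K * V + (volume (bad ∩ s)).toReal * 2 := by
        rw [integral_add (integrableOn_const (C := K) hμfin)
          ((integrable_const (2:ℝ)).indicator hbad_meas)]
        rw [setIntegral_const, smul_eq_mul, mul_comm]
        congr 1
        rw [integral_indicator hbad_meas, Measure.restrict_restrict hbad_meas,
          setIntegral_const, smul_eq_mul]; rfl
      rw [heval] at hmono
      have : (volume (bad ∩ s)).toReal * 2 ≤ 2 * (θ * V) := by linarith
      linarith
    -- average bound
    have havg_fc : ⨍ q in s, |f q - c| ≤ K + 2 * θ := by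
      rw [setAverage_eq, smul_eq_mul]
      have h1 : (volume s).toReal⁻¹ * ∫ q in s, |f q - c|
          ≤ V⁻¹ * (K * V + 2 * (θ * V)) := by
        apply mul_le_mul_of_nonneg_left hIbound
        rw [← hVdef]
        exact inv_nonneg.mpr hV0.le
      have h2 : V⁻¹ * (K * V + 2 * (θ * V)) = K + 2 * θ := by
        field_simp
      change V⁻¹ * _ ≤ _
      linarith
    -- conclusion
    have hmain := aux_avg (volume.restrict s) f hf_int c
    calc (⨍ q in s, |f q - ⨍ q' in s, f q'|) ≤ 2 * ⨍ q in s, |f q - c| := hmain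
      _ ≤ 2 * (K + 2 * θ) := by linarith
      _ ≤ δ := by linarith
  · intro hcont
    set v : EuclideanSpace ℝ (Fin n) := EuclideanSpace.single (⟨0, by omega⟩ : Fin n) (1:ℝ)
      with hvdef
    have hvnorm : ‖v‖ = 1 := by
      rw [hvdef, EuclideanSpace.norm_single]
      norm_num
    have hvne : v ≠ 0 := by
      intro h
      rw [h, norm_zero] at hvnorm
      norm_num at hvnorm
    set p : ℕ → EuclideanSpace ℝ (Fin n) × EuclideanSpace ℝ (Fin n) :=
      fun k => ((1 / ((k:ℝ) + 1)) • v, 0) with hpdef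
    have hp : Filter.Tendsto p Filter.atTop (nhds 0) := by
      have h1 : Filter.Tendsto (fun k : ℕ => (1 / ((k:ℝ) + 1)) • v) Filter.atTop
          (nhds ((0:ℝ) • v)) := tendsto_one_div_add_atTop_nhds_zero_nat.smul_const v
      rw [zero_smul] at h1
      exact h1.prodMk_nhds tendsto_const_nhds
    have hA1 : ∀ k, (1:ℝ) ≤ A (p k) := by
      intro k
      have hne : p k ≠ 0 := by
        rw [hpdef]
        simp only [Prod.ext_iff, ne_eq, not_and_or]
        left
        intro h
        exact hvne (by
          have h2 : (1 / ((k:ℝ) + 1)) ≠ 0 := by positivity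
          have := smul_eq_zero.mp h
          tauto)
      rw [hA _ hne]
      have := Real.neg_one_le_sin (|Real.log (‖(p k).1‖ + ‖(p k).2‖)| ^ α)
      linarith
    have hlim : Filter.Tendsto (fun k => A (p k)) Filter.atTop (nhds (A 0)) :=
      (hcont.tendsto).comp hp
    rw [hA0] at hlim
    have h10 : (1:ℝ) ≤ 0 := ge_of_tendsto' hlim hA1
    linarith
end
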